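/- arXiv:0904.4057 — 3 statements merged into one kernel-verified Lean document; each statement's English description precedes it below -/
import Mathlib

section
/- Fix δ ∈ (0,1) and c₀ > 0, and for each integer k ≥ 2 let R = c₀·ln(k/δ)·√k and D = ⌊k/R⌋, and set β = ∑_{i=1}^{k} (τ(i) + Ω_I(i)). Then β ≥ 1 for every k ≥ 2, and there exist a constant C > 0 and an integer K₀ such that for all k ≥ K₀, β ≤ 1 + C·(ln k)²/√k. -/
/-- The Ideal Soliton distribution on `{1, …, k}`:
`Ω_I(1) = 1/k` and `Ω_I(d) = 1/(d(d−1))` for `d = 2, …, k`. -/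
noncomputable def idealSoliton (k d : ℕ) : ℝ :=
  if d = 1 then 1 / (k : ℝ) else 1 / ((d : ℝ) * ((d : ℝ) - 1))

/-- The function `τ` from the Robust Soliton construction: with `D = ⌊k/R⌋`,
`τ(d) = R/(dk)` for `1 ≤ d ≤ D−1`, `τ(D) = R·ln(R/δ)/k`, and `τ(d) = 0` for `D < d ≤ k`. -/
noncomputable def tauRS (k : ℕ) (R δ : ℝ) (d : ℕ) : ℝ :=
  if d < ⌊(k : ℝ) / R⌋₊ then R / ((d : ℝ) * (k : ℝ))
  else if d = ⌊(k : ℝ) / R⌋₊ then R * Real.log (R / δ) / (k : ℝ)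
  else 0

/-- The normalizing constant `β = ∑_{i=1}^{k} (τ(i) + Ω_I(i))` of the Robust Soliton
distribution. -/
noncomputable def betaRS (k : ℕ) (R δ : ℝ) : ℝ :=
  ∑ i ∈ Finset.Icc 1 k, (tauRS k R δ i + idealSoliton k i)

lemma tele_sum (k : ℕ) (hk : 1 ≤ k) :
    ∑ i ∈ Finset.Icc 2 k, (1 / ((i : ℝ) * ((i : ℝ) - 1))) = 1 - 1 / (k : ℝ) := by
  induction k with
  | zero => omega
  | succ n ih =>
    rcases Nat.lt_or_ge n 1 with h | h
    · interval_cases n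
      simp
    · rw [Finset.sum_Icc_succ_top (by omega), ih h]
      have hn : (1 : ℝ) ≤ (n : ℝ) := by exact_mod_cast h
      have hn0 : (n : ℝ) ≠ 0 := by linarith
      have hn1 : (n : ℝ) + 1 ≠ 0 := by linarith
      push_cast
      field_simp
      rw [add_sub_cancel_right, div_self hn0]
      ring

lemma harm_le (k : ℕ) (hk : 1 ≤ k) :
    ∑ i ∈ Finset.Icc 1 k, (1 / (i : ℝ)) ≤ 1 + Real.log k := by
  induction k with
  | zero => omega
  | succ n ih =>
    rcases Nat.lt_or_ge n 1 with h | h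
    · interval_cases n
      simp
    · rw [Finset.sum_Icc_succ_top (by omega)]
      have hn : (1 : ℝ) ≤ (n : ℝ) := by exact_mod_cast h
      have key : 1 / ((n : ℝ) + 1) ≤ Real.log ((n : ℝ) + 1) - Real.log n := by
        have h1 : Real.log ((n : ℝ) / ((n : ℝ) + 1)) ≤ (n : ℝ) / ((n : ℝ) + 1) - 1 :=
          Real.log_le_sub_one_of_pos (by positivity)
        rw [Real.log_div (by linarith) (by linarith)] at h1
        have h2 : (n : ℝ) / ((n : ℝ) + 1) - 1 = -(1 / ((n : ℝ) + 1)) := by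
          field_simp
          ring
        linarith
      have := ih h
      push_cast
      linarith

lemma sum_ideal (k : ℕ) (hk : 1 ≤ k) :
    ∑ i ∈ Finset.Icc 1 k, idealSoliton k i = 1 := by
  have e : Finset.Icc 1 k = insert 1 (Finset.Ioc 1 k) := (Finset.Ioc_insert_left hk).symm
  have e2 : Finset.Ioc 1 k = Finset.Icc 2 k := (Finset.Icc_add_one_left_eq_Ioc 1 k).symm
  rw [e, Finset.sum_insert (by simp), e2]
  have h2 : ∑ i ∈ Finset.Icc 2 k, idealSoliton k i
      = ∑ i ∈ Finset.Icc 2 k, (1 / ((i : ℝ) * ((i : ℝ) - 1))) := by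
    apply Finset.sum_congr rfl
    intro i hi
    have : 2 ≤ i := (Finset.mem_Icc.mp hi).1
    unfold idealSoliton
    rw [if_neg (by omega)]
  rw [h2, tele_sum k hk]
  unfold idealSoliton
  rw [if_pos rfl]
  ring

lemma betaRS_split (k : ℕ) (R δ : ℝ) (hk : 1 ≤ k) :
    betaRS k R δ = (∑ i ∈ Finset.Icc 1 k, tauRS k R δ i) + 1 := by
  unfold betaRS
  rw [Finset.sum_add_distrib, sum_ideal k hk]

lemma tau_nonneg (k : ℕ) (R δ : ℝ) (hR : 0 ≤ R) (hlog : 0 ≤ Real.log (R / δ)) (i : ℕ) :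
    0 ≤ tauRS k R δ i := by
  unfold tauRS
  split_ifs with h1 h2
  · exact div_nonneg hR (by positivity)
  · exact div_nonneg (mul_nonneg hR hlog) (by positivity)
  · exact le_rfl

set_option maxHeartbeats 1600000 in
/-- Fix `δ ∈ (0,1)` and `c₀ > 0`, and for each integer `k ≥ 2` let
`R = c₀·ln(k/δ)·√k`, `D = ⌊k/R⌋`, and `β = ∑_{i=1}^{k} (τ(i) + Ω_I(i))`.
Then `β ≥ 1` for every `k ≥ 2`, and there exist a constant `C > 0` and an integer `K₀`
such that for all `k ≥ K₀`, `β ≤ 1 + C·(ln k)²/√k`. -/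
theorem betaRS_bounds (δ c₀ : ℝ) (hδ : δ ∈ Set.Ioo (0 : ℝ) 1) (hc₀ : 0 < c₀) :
    (∀ k : ℕ, 2 ≤ k → 1 ≤ betaRS k (c₀ * Real.log ((k : ℝ) / δ) * Real.sqrt (k : ℝ)) δ) ∧
    (∃ C : ℝ, 0 < C ∧ ∃ K₀ : ℕ, 2 ≤ K₀ ∧ ∀ k : ℕ, K₀ ≤ k →
      betaRS k (c₀ * Real.log ((k : ℝ) / δ) * Real.sqrt (k : ℝ)) δ
        ≤ 1 + C * (Real.log (k : ℝ)) ^ 2 / Real.sqrt (k : ℝ)) := by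
  obtain ⟨hδ0, hδ1⟩ := hδ
  constructor
  · -- Part 1: β ≥ 1
    intro k hk
    have hk2 : (2 : ℝ) ≤ (k : ℝ) := by exact_mod_cast hk
    have hk0 : (0 : ℝ) < (k : ℝ) := by linarith
    set R := c₀ * Real.log ((k : ℝ) / δ) * Real.sqrt (k : ℝ) with hRdef
    have hR0 : 0 < R := by
      apply mul_pos (mul_pos hc₀ _) (Real.sqrt_pos.mpr hk0)
      apply Real.log_pos
      rw [lt_div_iff₀ hδ0]
      nlinarith
    rw [betaRS_split k R δ (by omega)]
    have hnn : 0 ≤ ∑ i ∈ Finset.Icc 1 k, tauRS k R δ i := by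
      by_cases hδR : δ ≤ R
      · exact Finset.sum_nonneg fun i _ => tau_nonneg k R δ hR0.le
          (Real.log_nonneg (by rw [le_div_iff₀ hδ0]; linarith)) i
      · push_neg at hδR
        have hD : k ≤ ⌊(k : ℝ) / R⌋₊ := by
          apply Nat.le_floor
          rw [le_div_iff₀ hR0]
          nlinarith
        by_cases hDk : k < ⌊(k : ℝ) / R⌋₊
        · apply Finset.sum_nonneg
          intro i hi
          have hik : i ≤ k := (Finset.mem_Icc.mp hi).2
          unfold tauRS
          rw [if_pos (by omega)]
          exact div_nonneg hR0.le (by positivity)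
        · have hDk' : ⌊(k : ℝ) / R⌋₊ = k := le_antisymm (not_lt.mp hDk) hD
          have hkR : (k : ℝ) / R < (k : ℝ) + 1 := by
            have h := Nat.lt_floor_add_one ((k : ℝ) / R)
            rw [hDk'] at h
            exact_mod_cast h
          have hRlb : (2 : ℝ) / 3 ≤ R := by
            rw [div_lt_iff₀ hR0] at hkR
            nlinarith
          have hlog : -(1 / 2 : ℝ) ≤ Real.log (R / δ) := by
            have h1 : Real.log (δ / R) ≤ δ / R - 1 :=
              Real.log_le_sub_one_of_pos (by positivity)
            have h2 : δ / R ≤ 3 / 2 := by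
              rw [div_le_iff₀ hR0]
              nlinarith
            have h3 : Real.log (R / δ) = -Real.log (δ / R) := by
              rw [← Real.log_inv]
              congr 1
              field_simp
            linarith
          have hkmem : k ∈ Finset.Icc 1 k := Finset.mem_Icc.mpr ⟨by omega, le_rfl⟩
          rw [← Finset.sum_erase_add _ _ hkmem]
          have htk : tauRS k R δ k = R * Real.log (R / δ) / (k : ℝ) := by
            unfold tauRS
            rw [if_neg (by omega), if_pos hDk'.symm]
          have hnn' : ∀ i ∈ (Finset.Icc 1 k).erase k, 0 ≤ tauRS k R δ i := by
            intro i hi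
            obtain ⟨hne, hmem⟩ := Finset.mem_erase.mp hi
            have hik : i ≤ k := (Finset.mem_Icc.mp hmem).2
            unfold tauRS
            rw [if_pos (by omega)]
            exact div_nonneg hR0.le (by positivity)
          have h1mem : 1 ∈ (Finset.Icc 1 k).erase k :=
            Finset.mem_erase.mpr ⟨by omega, Finset.mem_Icc.mpr ⟨le_rfl, by omega⟩⟩
          have hlb : tauRS k R δ 1 ≤ ∑ i ∈ (Finset.Icc 1 k).erase k, tauRS k R δ i :=
            Finset.single_le_sum hnn' h1mem
          have ht1 : tauRS k R δ 1 = R / (k : ℝ) := by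
            unfold tauRS
            rw [if_pos (by omega)]
            norm_num
          have htklb : -(1 / 2) * (R / (k : ℝ)) ≤ R * Real.log (R / δ) / (k : ℝ) := by
            have h := (div_le_div_iff_of_pos_right hk0).mpr (mul_le_mul_of_nonneg_left hlog hR0.le)
            calc -(1 / 2) * (R / (k : ℝ)) = R * -(1 / 2) / (k : ℝ) := by ring
              _ ≤ R * Real.log (R / δ) / (k : ℝ) := h
          rw [ht1] at hlb
          rw [htk]
          have hRk : 0 < R / (k : ℝ) := by positivity
          linarith
    linarith
  · -- Part 2: upper bound
    refine ⟨8 * c₀, by positivity, ?_⟩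
    set M := max (1 / c₀) (2 * c₀ / δ) with hMdef
    have hM0 : 0 < M := lt_of_lt_of_le (by positivity) (le_max_left _ _)
    refine ⟨max 3 ⌈max (1 / δ) (M ^ 2)⌉₊, le_trans (by norm_num) (le_max_left _ _), ?_⟩
    intro k hk
    have hk3n : 3 ≤ k := le_trans (le_max_left _ _) hk
    have hk3 : (3 : ℝ) ≤ (k : ℝ) := by exact_mod_cast hk3n
    have hk0 : (0 : ℝ) < (k : ℝ) := by linarith
    have hceil : (max (1 / δ) (M ^ 2) : ℝ) ≤ (k : ℝ) := by
      calc (max (1 / δ) (M ^ 2) : ℝ) ≤ (⌈max (1 / δ) (M ^ 2)⌉₊ : ℝ) := Nat.le_ceil _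
        _ ≤ (k : ℝ) := by exact_mod_cast le_trans (le_max_right _ _) hk
    have hkδ : 1 / δ ≤ (k : ℝ) := le_trans (le_max_left _ _) hceil
    have hkM : M ^ 2 ≤ (k : ℝ) := le_trans (le_max_right _ _) hceil
    have hsqrt : 0 < Real.sqrt (k : ℝ) := Real.sqrt_pos.mpr hk0
    have hlogk : 1 ≤ Real.log (k : ℝ) := by
      rw [Real.le_log_iff_exp_le hk0]
      have := Real.exp_one_lt_d9
      norm_num at this ⊢
      linarith
    have hlogδk : Real.log (1 / δ) ≤ Real.log (k : ℝ) := Real.log_le_log (by positivity) hkδ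
    have hlogδ : Real.log (1 / δ) = -Real.log δ := by
      rw [one_div, Real.log_inv]
    have hlkd : Real.log ((k : ℝ) / δ) ≤ 2 * Real.log (k : ℝ) := by
      rw [Real.log_div (ne_of_gt hk0) (ne_of_gt hδ0)]
      linarith
    have hlkd1 : Real.log (k : ℝ) ≤ Real.log ((k : ℝ) / δ) := by
      rw [Real.log_div (ne_of_gt hk0) (ne_of_gt hδ0)]
      have := Real.log_neg hδ0 hδ1
      linarith
    set R := c₀ * Real.log ((k : ℝ) / δ) * Real.sqrt (k : ℝ) with hRdef
    have hMle : M ≤ Real.sqrt (k : ℝ) := by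
      have h := Real.sqrt_le_sqrt hkM
      rwa [Real.sqrt_sq hM0.le] at h
    have hR1 : (1 : ℝ) ≤ R := by
      have h1 : 1 / c₀ ≤ Real.sqrt (k : ℝ) := le_trans (le_max_left _ _) hMle
      have h2 : 1 ≤ c₀ * Real.sqrt (k : ℝ) := by
        rw [div_le_iff₀ hc₀] at h1
        nlinarith
      calc (1 : ℝ) ≤ c₀ * Real.sqrt (k : ℝ) := h2
        _ ≤ c₀ * Real.log ((k : ℝ) / δ) * Real.sqrt (k : ℝ) := by nlinarith
    have hR0 : 0 < R := lt_of_lt_of_le one_pos hR1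
    have hlogRδ0 : 0 ≤ Real.log (R / δ) := by
      apply Real.log_nonneg
      rw [le_div_iff₀ hδ0]
      linarith
    have hlogkk : Real.log (k : ℝ) ≤ (k : ℝ) := by
      linarith [Real.log_le_sub_one_of_pos hk0]
    have h2cδ : 2 * c₀ / δ ≤ Real.sqrt (k : ℝ) := le_trans (le_max_right _ _) hMle
    have hss : Real.sqrt (k : ℝ) * Real.sqrt (k : ℝ) = (k : ℝ) := Real.mul_self_sqrt hk0.le
    have hRδk2 : R / δ ≤ (k : ℝ) ^ 2 := by
      have hRle : R ≤ 2 * c₀ * (k : ℝ) * Real.sqrt (k : ℝ) := by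
        have hL : Real.log ((k : ℝ) / δ) ≤ 2 * (k : ℝ) := by linarith
        have := mul_le_mul_of_nonneg_right
          (mul_le_mul_of_nonneg_left hL hc₀.le) hsqrt.le
        calc R = c₀ * Real.log ((k : ℝ) / δ) * Real.sqrt (k : ℝ) := rfl
          _ ≤ c₀ * (2 * (k : ℝ)) * Real.sqrt (k : ℝ) := this
          _ = 2 * c₀ * (k : ℝ) * Real.sqrt (k : ℝ) := by ring
      rw [div_le_iff₀ hδ0]
      have h3 : 2 * c₀ ≤ Real.sqrt (k : ℝ) * δ := by
        rw [div_le_iff₀ hδ0] at h2cδ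
        linarith
      have h4 : 2 * c₀ * ((k : ℝ) * Real.sqrt (k : ℝ)) ≤
          Real.sqrt (k : ℝ) * δ * ((k : ℝ) * Real.sqrt (k : ℝ)) :=
        mul_le_mul_of_nonneg_right h3 (by positivity)
      calc R ≤ 2 * c₀ * (k : ℝ) * Real.sqrt (k : ℝ) := hRle
        _ = 2 * c₀ * ((k : ℝ) * Real.sqrt (k : ℝ)) := by ring
        _ ≤ Real.sqrt (k : ℝ) * δ * ((k : ℝ) * Real.sqrt (k : ℝ)) := h4
        _ = δ * (Real.sqrt (k : ℝ) * Real.sqrt (k : ℝ)) * (k : ℝ) := by ring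
        _ = δ * (k : ℝ) * (k : ℝ) := by rw [hss]
        _ = (k : ℝ) ^ 2 * δ := by ring
    have hlogRδ : Real.log (R / δ) ≤ 2 * Real.log (k : ℝ) := by
      have h := Real.log_le_log (by positivity) hRδk2
      rwa [show ((k : ℝ) ^ 2 = (k : ℝ) ^ (2 : ℕ)) from by norm_num, Real.log_pow,
        Nat.cast_ofNat] at h
    set D := ⌊(k : ℝ) / R⌋₊ with hDdef
    have hpt : ∀ i ∈ Finset.Icc 1 k, tauRS k R δ i ≤
        R / (k : ℝ) * (1 / (i : ℝ)) + (if i = D then R * Real.log (R / δ) / (k : ℝ) else 0) := by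
      intro i hi
      have hterm : R / ((i : ℝ) * (k : ℝ)) = R / (k : ℝ) * (1 / (i : ℝ)) := by
        rw [mul_one_div, div_div, mul_comm]
      unfold tauRS
      rw [← hDdef]
      split_ifs with h1 h2 h2
      · omega
      · rw [hterm]; simp
      · have h4 : (0 : ℝ) ≤ R / (k : ℝ) * (1 / (i : ℝ)) := by positivity
        linarith
      · have h4 : (0 : ℝ) ≤ R / (k : ℝ) * (1 / (i : ℝ)) := by positivity
        linarith
    have hsum : ∑ i ∈ Finset.Icc 1 k, tauRS k R δ i ≤
        R / (k : ℝ) * ∑ i ∈ Finset.Icc 1 k, (1 / (i : ℝ)) + R * Real.log (R / δ) / (k : ℝ) := by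
      calc ∑ i ∈ Finset.Icc 1 k, tauRS k R δ i
          ≤ ∑ i ∈ Finset.Icc 1 k, (R / (k : ℝ) * (1 / (i : ℝ)) +
            (if i = D then R * Real.log (R / δ) / (k : ℝ) else 0)) := Finset.sum_le_sum hpt
        _ = (∑ i ∈ Finset.Icc 1 k, R / (k : ℝ) * (1 / (i : ℝ))) +
            ∑ i ∈ Finset.Icc 1 k, (if i = D then R * Real.log (R / δ) / (k : ℝ) else 0) :=
            Finset.sum_add_distrib
        _ = R / (k : ℝ) * ∑ i ∈ Finset.Icc 1 k, (1 / (i : ℝ)) +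
            (if D ∈ Finset.Icc 1 k then R * Real.log (R / δ) / (k : ℝ) else 0) := by
            rw [← Finset.mul_sum, Finset.sum_ite_eq']
        _ ≤ _ := by
            apply add_le_add le_rfl
            split_ifs
            · exact le_rfl
            · positivity
    have hH := harm_le k (by omega)
    have hRk : 0 ≤ R / (k : ℝ) := by positivity
    have hA : ∑ i ∈ Finset.Icc 1 k, tauRS k R δ i ≤ R / (k : ℝ) * (4 * Real.log (k : ℝ)) := by
      have e1 : R / (k : ℝ) * ∑ i ∈ Finset.Icc 1 k, (1 / (i : ℝ)) ≤
          R / (k : ℝ) * (1 + Real.log (k : ℝ)) := mul_le_mul_of_nonneg_left hH hRk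
      have e2 : R * Real.log (R / δ) / (k : ℝ) = R / (k : ℝ) * Real.log (R / δ) := by ring
      have e3 : R / (k : ℝ) * Real.log (R / δ) ≤ R / (k : ℝ) * (2 * Real.log (k : ℝ)) :=
        mul_le_mul_of_nonneg_left hlogRδ hRk
      have e4 : R / (k : ℝ) * (1 + Real.log (k : ℝ)) + R / (k : ℝ) * (2 * Real.log (k : ℝ))
          = R / (k : ℝ) * (1 + Real.log (k : ℝ) + 2 * Real.log (k : ℝ)) := by ring
      have e5 : R / (k : ℝ) * (1 + Real.log (k : ℝ) + 2 * Real.log (k : ℝ)) ≤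
          R / (k : ℝ) * (4 * Real.log (k : ℝ)) :=
        mul_le_mul_of_nonneg_left (by linarith) hRk
      linarith [hsum, e1, e3, e4, e5]
    have hB : R / (k : ℝ) * (4 * Real.log (k : ℝ)) ≤
        8 * c₀ * Real.log (k : ℝ) ^ 2 / Real.sqrt (k : ℝ) := by
      have hRle2 : R ≤ 2 * c₀ * Real.log (k : ℝ) * Real.sqrt (k : ℝ) := by
        have := mul_le_mul_of_nonneg_right
          (mul_le_mul_of_nonneg_left hlkd hc₀.le) hsqrt.le
        calc R = c₀ * Real.log ((k : ℝ) / δ) * Real.sqrt (k : ℝ) := rfl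
          _ ≤ c₀ * (2 * Real.log (k : ℝ)) * Real.sqrt (k : ℝ) := this
          _ = 2 * c₀ * Real.log (k : ℝ) * Real.sqrt (k : ℝ) := by ring
      rw [div_mul_eq_mul_div, div_le_div_iff₀ hk0 hsqrt]
      have h5 : R * (4 * Real.log (k : ℝ)) * Real.sqrt (k : ℝ) ≤
          2 * c₀ * Real.log (k : ℝ) * Real.sqrt (k : ℝ) * (4 * Real.log (k : ℝ)) *
            Real.sqrt (k : ℝ) := by
        have h6 : 0 ≤ 4 * Real.log (k : ℝ) := by linarith
        have := mul_le_mul_of_nonneg_right (mul_le_mul_of_nonneg_right hRle2 h6) hsqrt.le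
        linarith
      calc R * (4 * Real.log (k : ℝ)) * Real.sqrt (k : ℝ)
          ≤ 2 * c₀ * Real.log (k : ℝ) * Real.sqrt (k : ℝ) * (4 * Real.log (k : ℝ)) *
            Real.sqrt (k : ℝ) := h5
        _ = 8 * c₀ * Real.log (k : ℝ) ^ 2 * (Real.sqrt (k : ℝ) * Real.sqrt (k : ℝ)) := by ring
        _ = 8 * c₀ * Real.log (k : ℝ) ^ 2 * (k : ℝ) := by rw [hss]
    rw [betaRS_split k R δ (by omega)]
    linarith
end

section
/- Fix δ ∈ (0,1) and c₀ > 0, and for each integer k ≥ 2 let R = c₀·ln(k/δ)·√k, D = ⌊k/R⌋, and let Ω_R be the Robust Soliton distribution. Then there exist a constant C > 0 and an integer K₀ such that for all k ≥ K₀, the probability that a node stores no information satisfies Ω′(0) = ∑_{d=1}^{k} (1 − d/k)^k·Ω_R(d) ≤ e^{−2} + e^{−1}/k + C·(ln k)²/√k. -/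
/-- The Robust Soliton distribution `Ω_R(d) = (τ(d) + Ω_I(d))/β`. -/
noncomputable def robustSoliton (k : ℕ) (R δ : ℝ) (d : ℕ) : ℝ :=
  (tauRS k R δ d + idealSoliton k d) / betaRS k R δ

lemma tele : ∀ k : ℕ, 1 ≤ k → ∑ i ∈ Finset.Icc 2 k, (1:ℝ)/((i:ℝ)*((i:ℝ)-1)) = 1 - 1/(k:ℝ)
  | 1, _ => by norm_num
  | (n+2), _ => by
      rw [Finset.sum_Icc_succ_top (by omega : 2 ≤ n+2), tele (n+1) (by omega)]
      have h1 : ((n:ℝ)+1) ≠ 0 := by positivity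
      have h2 : ((n:ℝ)+2) ≠ 0 := by positivity
      push_cast
      field_simp
      ring

lemma pow_bound (k d : ℕ) (hd : d ≤ k) (hk : 1 ≤ k) :
    (1 - (d:ℝ)/k)^k ≤ Real.exp (-(d:ℝ)) := by
  have hk0 : (0:ℝ) < k := by exact_mod_cast hk
  have h1 : 0 ≤ 1 - (d:ℝ)/k := by
    rw [sub_nonneg, div_le_one hk0]; exact_mod_cast hd
  have h2 : 1 - (d:ℝ)/k ≤ Real.exp (-((d:ℝ)/k)) := by
    have := Real.add_one_le_exp (-((d:ℝ)/k)); linarith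
  calc (1 - (d:ℝ)/k)^k ≤ (Real.exp (-((d:ℝ)/k)))^k := pow_le_pow_left₀ h1 h2 k
    _ = Real.exp (-(d:ℝ)) := by
        rw [← Real.exp_nat_mul]; congr 1; field_simp

set_option maxHeartbeats 1600000 in
/-- Fix `δ ∈ (0,1)` and `c₀ > 0`, and for each integer `k ≥ 2` let
`R = c₀·ln(k/δ)·√k`, `D = ⌊k/R⌋`, and let `Ω_R` be the Robust Soliton distribution.
Then there exist a constant `C > 0` and an integer `K₀` such that for all `k ≥ K₀`, the
probability that a node stores no information satisfies
`Ω′(0) = ∑_{d=1}^{k} (1 − d/k)^k·Ω_R(d) ≤ e^{−2} + e^{−1}/k + C·(ln k)²/√k`. -/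
theorem robustSoliton_store_nothing_le (δ c₀ : ℝ) (hδ : δ ∈ Set.Ioo (0 : ℝ) 1)
    (hc₀ : 0 < c₀) :
    ∃ C : ℝ, 0 < C ∧ ∃ K₀ : ℕ, 2 ≤ K₀ ∧ ∀ k : ℕ, K₀ ≤ k →
      ∑ d ∈ Finset.Icc 1 k, (1 - (d : ℝ) / (k : ℝ)) ^ k *
          robustSoliton k (c₀ * Real.log ((k : ℝ) / δ) * Real.sqrt (k : ℝ)) δ d
        ≤ Real.exp (-2) + Real.exp (-1) / (k : ℝ)
            + C * (Real.log (k : ℝ)) ^ 2 / Real.sqrt (k : ℝ) := by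
  obtain ⟨hδ0, hδ1⟩ := hδ
  refine ⟨14 * c₀, by positivity, ⌈max (max (1/δ) (1/c₀^2)) c₀⌉₊ + 3, by omega, ?_⟩
  intro k hk
  have hk3 : 3 ≤ k := by omega
  have hk1 : 1 ≤ k := by omega
  have hk0 : (0:ℝ) < k := by exact_mod_cast (by omega : 0 < k)
  have hkM : max (max (1/δ) (1/c₀^2)) c₀ ≤ (k:ℝ) := by
    calc max (max (1/δ) (1/c₀^2)) c₀ ≤ (⌈max (max (1/δ) (1/c₀^2)) c₀⌉₊ : ℝ) := Nat.le_ceil _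
      _ ≤ (k:ℝ) := by
          have h : ⌈max (max (1/δ) (1/c₀^2)) c₀⌉₊ ≤ k := by omega
          exact_mod_cast h
  have hkδ : 1/δ ≤ (k:ℝ) := le_trans (le_trans (le_max_left _ _) (le_max_left _ _)) hkM
  have hkc2 : 1/c₀^2 ≤ (k:ℝ) := le_trans (le_trans (le_max_right _ _) (le_max_left _ _)) hkM
  have hkc : c₀ ≤ (k:ℝ) := le_trans (le_max_right _ _) hkM
  have hlogk : 1 ≤ Real.log k := by
    rw [← Real.log_exp 1]
    apply Real.log_le_log (Real.exp_pos 1)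
    calc Real.exp 1 ≤ 2.7182818286 := Real.exp_one_lt_d9.le
      _ ≤ 3 := by norm_num
      _ ≤ (k:ℝ) := by exact_mod_cast hk3
  set L := Real.log ((k:ℝ)/δ) with hLdef
  set sq := Real.sqrt (k:ℝ) with hsqdef
  set R := c₀ * L * sq with hRdef
  have hsq0 : 0 < sq := Real.sqrt_pos.mpr hk0
  have hsqsq : sq * sq = (k:ℝ) := Real.mul_self_sqrt hk0.le
  have hlogδ : Real.log δ < 0 := Real.log_neg hδ0 hδ1
  have hLd : L = Real.log k - Real.log δ := Real.log_div (ne_of_gt hk0) (ne_of_gt hδ0)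
  have hL1 : 1 ≤ L := by rw [hLd]; linarith
  have hlogδ2 : -Real.log δ ≤ Real.log k := by
    have h := Real.log_le_log (by positivity : (0:ℝ) < 1/δ) hkδ
    rwa [one_div, Real.log_inv] at h
  have hL2 : L ≤ 2 * Real.log k := by rw [hLd]; linarith
  have hsqc : 1/c₀ ≤ sq := by
    have h : Real.sqrt (1/c₀^2) ≤ sq := Real.sqrt_le_sqrt hkc2
    rwa [show (1/c₀^2 : ℝ) = (1/c₀)^2 by ring, Real.sqrt_sq (by positivity)] at h
  have hR1 : 1 ≤ R := by
    calc (1:ℝ) = c₀ * 1 * (1/c₀) := by field_simp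
      _ ≤ c₀ * L * sq := by
          apply mul_le_mul (mul_le_mul_of_nonneg_left hL1 hc₀.le) hsqc (by positivity)
          positivity
  have hR0 : 0 < R := lt_of_lt_of_le one_pos hR1
  have hRδ : 1 ≤ R/δ := (one_le_div hδ0).mpr (hδ1.le.trans hR1)
  have hlogRδ0 : 0 ≤ Real.log (R/δ) := Real.log_nonneg hRδ
  have hτ : ∀ d : ℕ, 0 ≤ tauRS k R δ d := by
    intro d
    unfold tauRS
    split_ifs with h1 h2
    · positivity
    · exact div_nonneg (mul_nonneg hR0.le hlogRδ0) hk0.le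
    · exact le_refl 0
  have hι : ∀ d : ℕ, 1 ≤ d → 0 ≤ idealSoliton k d := by
    intro d hd
    unfold idealSoliton
    split_ifs with h
    · positivity
    · apply div_nonneg zero_le_one
      have h2 : (2:ℝ) ≤ (d:ℝ) := by exact_mod_cast (by omega : 2 ≤ d)
      nlinarith
  have hβ : 1 ≤ betaRS k R δ := by
    unfold betaRS
    rw [Finset.sum_add_distrib, sum_ideal k hk1]
    have h := Finset.sum_nonneg (fun i (_ : i ∈ Finset.Icc 1 k) => hτ i)
    linarith
  have hp01 : ∀ d : ℕ, d ∈ Finset.Icc 1 k → 0 ≤ (1-(d:ℝ)/k)^k ∧ (1-(d:ℝ)/k)^k ≤ 1 := by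
    intro d hd
    simp only [Finset.mem_Icc] at hd
    have h0 : 0 ≤ 1 - (d:ℝ)/k := by
      rw [sub_nonneg, div_le_one hk0]; exact_mod_cast hd.2
    have h1 : 1 - (d:ℝ)/k ≤ 1 := by
      have : 0 ≤ (d:ℝ)/k := by positivity
      linarith
    exact ⟨pow_nonneg h0 k, pow_le_one₀ h0 h1⟩
  have hins : Finset.Icc 1 k = insert 1 (Finset.Icc 2 k) := by
    ext x; simp only [Finset.mem_Icc, Finset.mem_insert]; omega
  have step1 : ∑ d ∈ Finset.Icc 1 k, (1-(d:ℝ)/k)^k * robustSoliton k R δ d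
      ≤ ∑ d ∈ Finset.Icc 1 k, (1-(d:ℝ)/k)^k * (tauRS k R δ d + idealSoliton k d) := by
    apply Finset.sum_le_sum
    intro d hd
    have hd' := hd
    simp only [Finset.mem_Icc] at hd'
    apply mul_le_mul_of_nonneg_left _ (hp01 d hd).1
    unfold robustSoliton
    exact div_le_self (add_nonneg (hτ d) (hι d hd'.1)) hβ
  have hA : ∑ d ∈ Finset.Icc 1 k, (1-(d:ℝ)/k)^k * idealSoliton k d
      ≤ Real.exp (-1) / k + Real.exp (-2) := by
    rw [hins, Finset.sum_insert (by simp)]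
    have t1 : (1-((1:ℕ):ℝ)/k)^k * idealSoliton k 1 ≤ Real.exp (-1) / k := by
      rw [idealSoliton, if_pos rfl]
      have hb := pow_bound k 1 hk1 hk1
      rw [Nat.cast_one] at hb ⊢
      have : (1 - 1/(k:ℝ))^k * (1/(k:ℝ)) ≤ Real.exp (-1) * (1/(k:ℝ)) :=
        mul_le_mul_of_nonneg_right hb (by positivity)
      calc (1 - 1/(k:ℝ))^k * (1/(k:ℝ)) ≤ Real.exp (-1) * (1/(k:ℝ)) := this
        _ = Real.exp (-1) / k := by ring
    have t2 : ∑ d ∈ Finset.Icc 2 k, (1-(d:ℝ)/k)^k * idealSoliton k d ≤ Real.exp (-2) := by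
      calc ∑ d ∈ Finset.Icc 2 k, (1-(d:ℝ)/k)^k * idealSoliton k d
          ≤ ∑ d ∈ Finset.Icc 2 k, Real.exp (-2) * (1/((d:ℝ)*((d:ℝ)-1))) := by
            apply Finset.sum_le_sum
            intro d hd
            simp only [Finset.mem_Icc] at hd
            rw [idealSoliton, if_neg (by omega)]
            apply mul_le_mul _ le_rfl (by
              apply div_nonneg zero_le_one
              have h2 : (2:ℝ) ≤ (d:ℝ) := by exact_mod_cast hd.1
              nlinarith) (Real.exp_pos _).le
            calc (1-(d:ℝ)/k)^k ≤ Real.exp (-(d:ℝ)) := pow_bound k d hd.2 hk1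
              _ ≤ Real.exp (-2) := by
                  apply Real.exp_le_exp.mpr
                  have : (2:ℝ) ≤ (d:ℝ) := by exact_mod_cast hd.1
                  linarith
        _ = Real.exp (-2) * (1 - 1/(k:ℝ)) := by
            rw [← Finset.mul_sum, tele k hk1]
        _ ≤ Real.exp (-2) * 1 := by
            apply mul_le_mul_of_nonneg_left _ (Real.exp_pos _).le
            have : 0 ≤ 1/(k:ℝ) := by positivity
            linarith
        _ = Real.exp (-2) := mul_one _
    linarith
  have hharm : ∑ d ∈ Finset.Icc 1 k, (1:ℝ)/(d:ℝ) ≤ 1 + Real.log k := by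
    have h := harmonic_le_one_add_log k
    rw [harmonic_eq_sum_Icc] at h
    have h2 : ((∑ i ∈ Finset.Icc 1 k, ((i:ℚ))⁻¹ : ℚ) : ℝ) ≤ 1 + Real.log k := by
      exact_mod_cast h
    push_cast at h2
    simpa [one_div] using h2
  have hB : ∑ d ∈ Finset.Icc 1 k, (1-(d:ℝ)/k)^k * tauRS k R δ d
      ≤ R/k * (1 + Real.log k) + R * Real.log (R/δ) / k := by
    set D := ⌊(k:ℝ)/R⌋₊ with hD
    calc ∑ d ∈ Finset.Icc 1 k, (1-(d:ℝ)/k)^k * tauRS k R δ d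
        ≤ ∑ d ∈ Finset.Icc 1 k, tauRS k R δ d := by
          apply Finset.sum_le_sum
          intro d hd
          exact mul_le_of_le_one_left (hτ d) (hp01 d hd).2
      _ ≤ ∑ d ∈ Finset.Icc 1 k,
            (R/((d:ℝ)*k) + if d = D then R * Real.log (R/δ) / k else 0) := by
          apply Finset.sum_le_sum
          intro d hd
          have hdk : 0 ≤ R/((d:ℝ)*k) := by positivity
          have hterm : 0 ≤ R * Real.log (R/δ) / k :=
            div_nonneg (mul_nonneg hR0.le hlogRδ0) hk0.le
          unfold tauRS
          rw [← hD]
          split_ifs <;> first | omega | linarith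
      _ = (∑ d ∈ Finset.Icc 1 k, R/((d:ℝ)*k))
            + ∑ d ∈ Finset.Icc 1 k, (if d = D then R * Real.log (R/δ) / k else 0) :=
          Finset.sum_add_distrib
      _ ≤ R/k * (1 + Real.log k) + R * Real.log (R/δ) / k := by
          have e1 : ∑ d ∈ Finset.Icc 1 k, R/((d:ℝ)*k)
              = R/k * ∑ d ∈ Finset.Icc 1 k, (1:ℝ)/(d:ℝ) := by
            rw [Finset.mul_sum]
            apply Finset.sum_congr rfl
            intro d hd
            simp only [Finset.mem_Icc] at hd
            rw [mul_one_div, div_div, mul_comm (k:ℝ) (d:ℝ)]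
          have e2 : ∑ d ∈ Finset.Icc 1 k, (if d = D then R * Real.log (R/δ) / k else 0)
              ≤ R * Real.log (R/δ) / k := by
            rw [Finset.sum_ite_eq' (Finset.Icc 1 k) D (fun _ => R * Real.log (R/δ) / k)]
            split_ifs
            · exact le_refl _
            · exact div_nonneg (mul_nonneg hR0.le hlogRδ0) hk0.le
          have e3 : R/k * (∑ d ∈ Finset.Icc 1 k, (1:ℝ)/(d:ℝ)) ≤ R/k * (1 + Real.log k) :=
            mul_le_mul_of_nonneg_left hharm (by positivity)
          rw [e1]
          linarith
  have hRk : R/(k:ℝ) = c₀ * L / sq := by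
    rw [hRdef, ← hsqsq]
    field_simp
  have hlogR : Real.log (R/δ) ≤ 5 * Real.log k := by
    rw [Real.log_div (ne_of_gt hR0) (ne_of_gt hδ0)]
    have e1 : Real.log R = Real.log (c₀ * L) + Real.log sq :=
      Real.log_mul (by positivity) (ne_of_gt hsq0)
    have e1' : Real.log (c₀ * L) = Real.log c₀ + Real.log L :=
      Real.log_mul (ne_of_gt hc₀) (by linarith)
    have e2 : Real.log sq = Real.log k / 2 := Real.log_sqrt hk0.le
    have e3 : Real.log c₀ ≤ Real.log k := Real.log_le_log hc₀ hkc
    have e4 : Real.log L ≤ L - 1 := Real.log_le_sub_one_of_pos (by linarith)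
    linarith
  have key : R/k * (1 + Real.log k) + R * Real.log (R/δ) / k
      ≤ 14 * c₀ * (Real.log k)^2 / sq := by
    have h2 : R * Real.log (R/δ) / k = R/k * Real.log (R/δ) := by ring
    rw [h2, hRk, div_mul_eq_mul_div, div_mul_eq_mul_div, ← add_div,
      div_le_div_iff_of_pos_right hsq0]
    have hlk0 : (0:ℝ) ≤ Real.log k := by linarith
    have p1 : (0:ℝ) ≤ (2 * Real.log k - L) * (1 + Real.log k) :=
      mul_nonneg (by linarith) (by linarith)
    have p2 : (0:ℝ) ≤ Real.log k * (Real.log k - 1) :=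
      mul_nonneg (by linarith) (by linarith)
    have u1 : L * (1 + Real.log k) ≤ 4 * (Real.log k)^2 := by nlinarith [p1, p2]
    have p3 : (0:ℝ) ≤ (2 * Real.log k - L) * Real.log (R/δ) :=
      mul_nonneg (by linarith) hlogRδ0
    have p4 : (0:ℝ) ≤ (2 * Real.log k) * (5 * Real.log k - Real.log (R/δ)) :=
      mul_nonneg (by linarith) (by linarith)
    have u2 : L * Real.log (R/δ) ≤ 10 * (Real.log k)^2 := by nlinarith [p3, p4]
    have t1 := mul_le_mul_of_nonneg_left u1 hc₀.le
    have t2 := mul_le_mul_of_nonneg_left u2 hc₀.le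
    nlinarith [t1, t2]
  calc ∑ d ∈ Finset.Icc 1 k, (1-(d:ℝ)/k)^k * robustSoliton k R δ d
      ≤ ∑ d ∈ Finset.Icc 1 k, (1-(d:ℝ)/k)^k * (tauRS k R δ d + idealSoliton k d) := step1
    _ = (∑ d ∈ Finset.Icc 1 k, (1-(d:ℝ)/k)^k * tauRS k R δ d)
        + ∑ d ∈ Finset.Icc 1 k, (1-(d:ℝ)/k)^k * idealSoliton k d := by
        rw [← Finset.sum_add_distrib]
        apply Finset.sum_congr rfl
        intro d _
        ring
    _ ≤ (R/k * (1 + Real.log k) + R * Real.log (R/δ) / k)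
        + (Real.exp (-1) / k + Real.exp (-2)) := add_le_add hB hA
    _ ≤ Real.exp (-2) + Real.exp (-1) / k + 14 * c₀ * (Real.log k)^2 / sq := by
        linarith
end

section
/- Fix δ ∈ (0,1) and c₀ > 0, and for each integer k ≥ 2 let R = c₀·ln(k/δ)·√k, D = ⌊k/R⌋, and let Ω_R be the Robust Soliton distribution. Then there exists an integer K₀ such that for all k ≥ K₀, the probability that a node stores no information satisfies Ω′(0) = ∑_{d=1}^{k} (1 − d/k)^k·Ω_R(d) < e^{−2}. -/
open Finset Real Filter

lemma geom_Icc_le {r : ℝ} (h0 : 0 ≤ r) (h1 : r < 1) (m n : ℕ) :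
    ∑ d ∈ Finset.Icc m n, r ^ d ≤ r ^ m / (1 - r) := by
  have h2 : (0:ℝ) < 1 - r := by linarith
  rcases le_or_gt m (n + 1) with h | h
  · rw [← Finset.Ico_add_one_right_eq_Icc, geom_sum_Ico h1.ne h]
    have : (r ^ (n+1) - r ^ m) / (r - 1) = (r ^ m - r ^ (n+1)) / (1 - r) := by
      rw [div_eq_div_iff (by linarith : r - 1 ≠ 0) h2.ne']; ring
    rw [this]
    gcongr
    nlinarith [pow_nonneg h0 (n+1)]
  · rw [Finset.Icc_eq_empty (by omega), Finset.sum_empty]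
    positivity

lemma ideal_tele (k : ℕ) (hk : 1 ≤ k) :
    ∑ d ∈ Finset.Ioc 1 k, (1:ℝ) / ((d:ℝ) * ((d:ℝ) - 1)) = 1 - 1 / (k:ℝ) := by
  induction k, hk using Nat.le_induction with
  | base => simp
  | succ n hn ih =>
    rw [Finset.sum_Ioc_succ_top hn, ih]
    have h0 : (0:ℝ) < n := by exact_mod_cast hn
    push_cast
    field_simp
    ring_nf
    simp [h0.ne']

lemma core (k : ℕ) (hk : 3 ≤ k) (R δ : ℝ) (hδ0 : 0 < δ) (hRδ : δ ≤ R) :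
    ∑ d ∈ Finset.Icc 1 k, (1 - (d : ℝ) / (k : ℝ)) ^ k * robustSoliton k R δ d ≤
      R / k + R * Real.log (R / δ) / k + Real.exp (-1) / k
        + Real.exp (-1) ^ 2 / 2 + Real.exp (-1) ^ 3 / (6 * (1 - Real.exp (-1))) := by
  have hk0 : (0:ℝ) < k := by exact_mod_cast Nat.lt_of_lt_of_le (by norm_num) hk
  have hR0 : 0 < R := lt_of_lt_of_le hδ0 hRδ
  have hE2 : (2:ℝ) ≤ Real.exp 1 := by nlinarith [Real.add_one_le_exp 1]
  have hr0 : (0:ℝ) < Real.exp (-1) := Real.exp_pos _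
  have hrh : Real.exp (-1) ≤ 2⁻¹ := by
    rw [Real.exp_neg]
    exact inv_anti₀ (by norm_num) hE2
  have hr1 : Real.exp (-1) < 1 := by linarith
  have hlogRδ : 0 ≤ Real.log (R / δ) := Real.log_nonneg ((one_le_div hδ0).2 hRδ)
  have htau : ∀ d : ℕ, 0 ≤ tauRS k R δ d := by
    intro d
    unfold tauRS
    split_ifs with h1 h2
    · positivity
    · positivity
    · exact le_refl 0
  have hideal : ∀ d : ℕ, 0 ≤ idealSoliton k d := by
    intro d
    unfold idealSoliton
    split_ifs with h
    · positivity
    · match d, h with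
      | 0, _ => norm_num
      | (n+2), _ =>
        have h2 : (2:ℝ) ≤ ((n:ℝ) + 2) := by
          have : (0:ℝ) ≤ (n:ℝ) := Nat.cast_nonneg n
          linarith
        have : (0:ℝ) < ((n+2:ℕ):ℝ) * (((n+2:ℕ):ℝ) - 1) := by
          push_cast
          nlinarith
        positivity
  have hIcc : Finset.Icc 1 k = Finset.Ioc 0 k := by rw [← Finset.Icc_add_one_left_eq_Ioc]; rfl
  have hIoc01 : Finset.Ioc 0 1 = {1} := by decide
  have hIoc02 : Finset.Ioc 0 2 = {1, 2} := by decide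
  have hIsum : ∑ d ∈ Finset.Icc 1 k, idealSoliton k d = 1 := by
    rw [hIcc, ← Finset.sum_Ioc_consecutive _ (Nat.zero_le 1) (by omega : 1 ≤ k), hIoc01,
      Finset.sum_singleton]
    have h2 : ∑ d ∈ Finset.Ioc 1 k, idealSoliton k d
        = ∑ d ∈ Finset.Ioc 1 k, (1:ℝ) / ((d:ℝ) * ((d:ℝ) - 1)) := by
      refine Finset.sum_congr rfl fun d hd => ?_
      rw [Finset.mem_Ioc] at hd
      unfold idealSoliton
      rw [if_neg (by omega)]
    rw [h2, ideal_tele k (by omega)]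
    unfold idealSoliton
    rw [if_pos rfl]
    ring
  have hbeta : 1 ≤ betaRS k R δ := by
    unfold betaRS
    calc (1:ℝ) = ∑ d ∈ Finset.Icc 1 k, idealSoliton k d := hIsum.symm
      _ ≤ ∑ d ∈ Finset.Icc 1 k, (tauRS k R δ d + idealSoliton k d) :=
          Finset.sum_le_sum fun d _ => le_add_of_nonneg_left (htau d)
  -- termwise bound into exp
  have step1 : ∑ d ∈ Finset.Icc 1 k, (1 - (d : ℝ) / (k : ℝ)) ^ k * robustSoliton k R δ d
      ≤ ∑ d ∈ Finset.Icc 1 k, Real.exp (-1) ^ d * (tauRS k R δ d + idealSoliton k d) := by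
    refine Finset.sum_le_sum fun d hd => ?_
    rw [Finset.mem_Icc] at hd
    have hdk : (d:ℝ) ≤ k := by exact_mod_cast hd.2
    have hdk1 : (d:ℝ) / k ≤ 1 := (div_le_one hk0).2 hdk
    have h0 : (0:ℝ) ≤ 1 - (d:ℝ)/k := by linarith
    have hle : 1 - (d:ℝ)/k ≤ Real.exp (-((d:ℝ)/k)) := by
      nlinarith [Real.add_one_le_exp (-((d:ℝ)/k))]
    have ha : (1 - (d:ℝ)/k) ^ k ≤ Real.exp (-1) ^ d := by
      calc (1 - (d:ℝ)/k) ^ k ≤ Real.exp (-((d:ℝ)/k)) ^ k := pow_le_pow_left₀ h0 hle k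
        _ = Real.exp ((k:ℕ) * (-((d:ℝ)/k))) := (Real.exp_nat_mul _ k).symm
        _ = Real.exp ((d:ℕ) * (-1 : ℝ)) := by
            congr 1
            field_simp
        _ = Real.exp (-1) ^ d := Real.exp_nat_mul _ d
    have hnum : 0 ≤ tauRS k R δ d + idealSoliton k d := add_nonneg (htau d) (hideal d)
    have hb : robustSoliton k R δ d ≤ tauRS k R δ d + idealSoliton k d :=
      div_le_self hnum hbeta
    have hrs : 0 ≤ robustSoliton k R δ d := div_nonneg hnum (by linarith)
    exact mul_le_mul ha hb hrs (by positivity)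
  have hsplit : ∑ d ∈ Finset.Icc 1 k, Real.exp (-1) ^ d * (tauRS k R δ d + idealSoliton k d)
      = (∑ d ∈ Finset.Icc 1 k, Real.exp (-1) ^ d * tauRS k R δ d)
        + ∑ d ∈ Finset.Icc 1 k, Real.exp (-1) ^ d * idealSoliton k d := by
    rw [← Finset.sum_add_distrib]
    exact Finset.sum_congr rfl fun d _ => mul_add _ _ _
  -- geometric sums
  have hgeom1 : ∑ d ∈ Finset.Icc 1 k, Real.exp (-1) ^ d ≤ 1 := by
    calc ∑ d ∈ Finset.Icc 1 k, Real.exp (-1) ^ d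
        ≤ Real.exp (-1) ^ 1 / (1 - Real.exp (-1)) := geom_Icc_le hr0.le hr1 1 k
      _ ≤ 1 := by
          rw [div_le_one (by linarith)]
          rw [pow_one]
          linarith
  -- tau sum
  have htsum : ∑ d ∈ Finset.Icc 1 k, Real.exp (-1) ^ d * tauRS k R δ d
      ≤ R / k + R * Real.log (R / δ) / k := by
    have hterm : ∀ d ∈ Finset.Icc 1 k, Real.exp (-1) ^ d * tauRS k R δ d
        ≤ Real.exp (-1) ^ d * (R / k)
          + (if d = ⌊(k : ℝ) / R⌋₊ then R * Real.log (R / δ) / k else 0) := by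
      intro d hd
      rw [Finset.mem_Icc] at hd
      have hd1 : (1:ℝ) ≤ d := by exact_mod_cast hd.1
      rcases lt_trichotomy d ⌊(k : ℝ) / R⌋₊ with h | h | h
      · rw [tauRS, if_pos h, if_neg h.ne]
        rw [add_zero]
        refine mul_le_mul_of_nonneg_left ?_ (by positivity)
        apply div_le_div_of_nonneg_left hR0.le hk0
        nlinarith
      · subst h
        rw [tauRS, if_neg (lt_irrefl _), if_pos rfl]
        have hc : 0 ≤ R * Real.log (R / δ) / k := by positivity
        have hp1 : Real.exp (-1) ^ (⌊(k:ℝ)/R⌋₊) ≤ 1 := pow_le_one₀ hr0.le hr1.le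
        have h1 := mul_le_of_le_one_left hc hp1
        have h2 : 0 ≤ Real.exp (-1) ^ (⌊(k:ℝ)/R⌋₊) * (R / k) :=
          mul_nonneg (pow_nonneg hr0.le _) (div_nonneg hR0.le hk0.le)
        linarith
      · rw [tauRS, if_neg (by omega), if_neg (by omega)]
        rw [mul_zero, add_zero]
        positivity
    calc ∑ d ∈ Finset.Icc 1 k, Real.exp (-1) ^ d * tauRS k R δ d
        ≤ ∑ d ∈ Finset.Icc 1 k, (Real.exp (-1) ^ d * (R / k)
            + (if d = ⌊(k : ℝ) / R⌋₊ then R * Real.log (R / δ) / k else 0)) :=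
          Finset.sum_le_sum hterm
      _ = (∑ d ∈ Finset.Icc 1 k, Real.exp (-1) ^ d) * (R / k)
            + ∑ d ∈ Finset.Icc 1 k,
              (if d = ⌊(k : ℝ) / R⌋₊ then R * Real.log (R / δ) / k else 0) := by
          rw [Finset.sum_add_distrib, Finset.sum_mul]
      _ ≤ 1 * (R / k) + R * Real.log (R / δ) / k := by
          have h1 : (∑ d ∈ Finset.Icc 1 k, Real.exp (-1) ^ d) * (R / k) ≤ 1 * (R / k) :=
            mul_le_mul_of_nonneg_right hgeom1 (by positivity)
          have h2 : ∑ d ∈ Finset.Icc 1 k,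
              (if d = ⌊(k : ℝ) / R⌋₊ then R * Real.log (R / δ) / k else 0)
              ≤ R * Real.log (R / δ) / k := by
            rw [Finset.sum_ite_eq' (Finset.Icc 1 k) (⌊(k : ℝ) / R⌋₊)
              (fun _ => R * Real.log (R / δ) / k)]
            split_ifs
            · exact le_refl _
            · positivity
          linarith
      _ = R / k + R * Real.log (R / δ) / k := by ring
  -- ideal sum
  have hisum : ∑ d ∈ Finset.Icc 1 k, Real.exp (-1) ^ d * idealSoliton k d
      ≤ Real.exp (-1) / k + Real.exp (-1) ^ 2 / 2
        + Real.exp (-1) ^ 3 / (6 * (1 - Real.exp (-1))) := by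
    rw [hIcc, ← Finset.sum_Ioc_consecutive _ (Nat.zero_le 2) (by omega : 2 ≤ k), hIoc02]
    have hpair : ∑ d ∈ ({1, 2} : Finset ℕ), Real.exp (-1) ^ d * idealSoliton k d
        = Real.exp (-1) * (1 / k) + Real.exp (-1) ^ 2 * (1 / 2) := by
      rw [Finset.sum_pair (by norm_num : (1:ℕ) ≠ 2)]
      unfold idealSoliton
      norm_num
    rw [hpair]
    have htail : ∑ d ∈ Finset.Ioc 2 k, Real.exp (-1) ^ d * idealSoliton k d
        ≤ Real.exp (-1) ^ 3 / (6 * (1 - Real.exp (-1))) := by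
      have hterm : ∀ d ∈ Finset.Ioc 2 k, Real.exp (-1) ^ d * idealSoliton k d
          ≤ Real.exp (-1) ^ d * (1 / 6) := by
        intro d hd
        rw [Finset.mem_Ioc] at hd
        refine mul_le_mul_of_nonneg_left ?_ (by positivity)
        unfold idealSoliton
        rw [if_neg (by omega)]
        have h3 : (3:ℝ) ≤ (d:ℝ) := by exact_mod_cast hd.1
        have h6 : (6:ℝ) ≤ (d:ℝ) * ((d:ℝ) - 1) := by nlinarith
        rw [div_le_div_iff₀ (by nlinarith) (by norm_num)]
        linarith
      calc ∑ d ∈ Finset.Ioc 2 k, Real.exp (-1) ^ d * idealSoliton k d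
          ≤ ∑ d ∈ Finset.Ioc 2 k, Real.exp (-1) ^ d * (1 / 6) :=
            Finset.sum_le_sum hterm
        _ = (∑ d ∈ Finset.Icc 3 k, Real.exp (-1) ^ d) * (1 / 6) := by
            rw [← Finset.sum_mul, (by rfl : (3:ℕ) = 2 + 1), Finset.Icc_add_one_left_eq_Ioc]
        _ ≤ Real.exp (-1) ^ 3 / (1 - Real.exp (-1)) * (1 / 6) := by
            refine mul_le_mul_of_nonneg_right (geom_Icc_le hr0.le hr1 3 k) (by norm_num)
        _ = Real.exp (-1) ^ 3 / (6 * (1 - Real.exp (-1))) := by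
            have h1r : (1 - Real.exp (-1)) ≠ 0 := by linarith
            field_simp
    have e1 : Real.exp (-1) * (1/(k:ℝ)) = Real.exp (-1)/(k:ℝ) := by ring
    have e2 : Real.exp (-1)^2 * (1/2) = Real.exp (-1)^2/2 := by ring
    linarith [htail]
  calc ∑ d ∈ Finset.Icc 1 k, (1 - (d : ℝ) / (k : ℝ)) ^ k * robustSoliton k R δ d
      ≤ ∑ d ∈ Finset.Icc 1 k, Real.exp (-1) ^ d * (tauRS k R δ d + idealSoliton k d) := step1
    _ = _ + _ := hsplit
    _ ≤ (R / k + R * Real.log (R / δ) / k)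
        + (Real.exp (-1) / k + Real.exp (-1) ^ 2 / 2
          + Real.exp (-1) ^ 3 / (6 * (1 - Real.exp (-1)))) := add_le_add htsum hisum
    _ = _ := by ring

lemma tend_aux (c₀ δ : ℝ) :
    Tendsto (fun x : ℝ => c₀ * ((Real.log x + -Real.log δ)
        * (1 + Real.log (c₀ / δ ^ 2) + 2 * Real.log x)) / Real.sqrt x
      + Real.exp (-1) / x) atTop (nhds 0) := by
  have l1 : Tendsto (fun x : ℝ => Real.log x ^ 2 / Real.sqrt x) atTop (nhds 0) := by
    have h := (isLittleO_log_rpow_rpow_atTop (2:ℝ)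
      (by norm_num : (0:ℝ) < 1/2)).tendsto_div_nhds_zero
    refine h.congr fun x => ?_
    rw [Real.sqrt_eq_rpow, ← Real.rpow_natCast (Real.log x) 2]
    norm_num
  have l2 : Tendsto (fun x : ℝ => Real.log x / Real.sqrt x) atTop (nhds 0) := by
    have h := (isLittleO_log_rpow_atTop
      (by norm_num : (0:ℝ) < 1/2)).tendsto_div_nhds_zero
    refine h.congr fun x => ?_
    rw [Real.sqrt_eq_rpow]
  have l3 : Tendsto (fun x : ℝ => 1 / Real.sqrt x) atTop (nhds 0) := by
    have h := (tendsto_rpow_atTop (by norm_num : (0:ℝ) < 1/2)).inv_tendsto_atTop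
    refine h.congr fun x => ?_
    show ((x : ℝ) ^ ((1:ℝ)/2))⁻¹ = 1 / Real.sqrt x
    rw [Real.sqrt_eq_rpow]
    norm_num
  have l4 : Tendsto (fun x : ℝ => Real.exp (-1) / x) atTop (nhds 0) :=
    tendsto_const_nhds.div_atTop tendsto_id
  have hsum := (((l1.const_mul (2 * c₀)).add
      (l2.const_mul (c₀ * (1 + Real.log (c₀ / δ ^ 2)) + 2 * c₀ * (-Real.log δ)))).add
      (l3.const_mul (c₀ * (-Real.log δ) * (1 + Real.log (c₀ / δ ^ 2))))).add l4
  have hsum0 : Tendsto (fun x : ℝ =>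
      2 * c₀ * (Real.log x ^ 2 / Real.sqrt x)
      + (c₀ * (1 + Real.log (c₀ / δ ^ 2)) + 2 * c₀ * (-Real.log δ))
          * (Real.log x / Real.sqrt x)
      + (c₀ * (-Real.log δ) * (1 + Real.log (c₀ / δ ^ 2))) * (1 / Real.sqrt x)
      + Real.exp (-1) / x) atTop (nhds 0) := by
    simpa using hsum
  refine hsum0.congr fun x => ?_
  ring

/-- Fix `δ ∈ (0,1)` and `c₀ > 0`, and for each integer `k ≥ 2` let
`R = c₀·ln(k/δ)·√k`, `D = ⌊k/R⌋`, and let `Ω_R` be the Robust Soliton distribution.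
Then there exists an integer `K₀` such that for all `k ≥ K₀`, the probability that a node
stores no information satisfies `Ω′(0) = ∑_{d=1}^{k} (1 − d/k)^k·Ω_R(d) < e^{−2}`. -/
theorem robustSoliton_store_nothing_lt (δ c₀ : ℝ) (hδ : δ ∈ Set.Ioo (0 : ℝ) 1)
    (hc₀ : 0 < c₀) :
    ∃ K₀ : ℕ, 2 ≤ K₀ ∧ ∀ k : ℕ, K₀ ≤ k →
      ∑ d ∈ Finset.Icc 1 k, (1 - (d : ℝ) / (k : ℝ)) ^ k *
          robustSoliton k (c₀ * Real.log ((k : ℝ) / δ) * Real.sqrt (k : ℝ)) δ d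
        < Real.exp (-2) := by
  obtain ⟨hδ0, hδ1⟩ := hδ
  have hE2 : (2:ℝ) ≤ Real.exp 1 := by nlinarith [Real.add_one_le_exp 1]
  have hr0 : (0:ℝ) < Real.exp (-1) := Real.exp_pos _
  have hrh : Real.exp (-1) ≤ 2⁻¹ := by
    rw [Real.exp_neg]; exact inv_anti₀ (by norm_num) hE2
  have hsq : Real.exp (-1) ^ 2 = Real.exp (-2) := by
    rw [← Real.exp_nat_mul]; norm_num
  set ε₀ : ℝ := Real.exp (-2) - (Real.exp (-1) ^ 2 / 2
    + Real.exp (-1) ^ 3 / (6 * (1 - Real.exp (-1)))) with hε₀def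
  have h1r : (0:ℝ) < 1 - Real.exp (-1) := by linarith
  have hε₀ : 0 < ε₀ := by
    have h2 : Real.exp (-1) ^ 3 / (6 * (1 - Real.exp (-1))) ≤ Real.exp (-1) ^ 3 / 3 := by
      apply div_le_div_of_nonneg_left (by positivity) (by norm_num)
      linarith
    have h3 : Real.exp (-1) ^ 3 ≤ Real.exp (-1) ^ 2 * 2⁻¹ := by
      nlinarith [sq_nonneg (Real.exp (-1))]
    rw [hε₀def, ← hsq]
    nlinarith
  set B : ℝ → ℝ := fun x => c₀ * ((Real.log x + -Real.log δ)
      * (1 + Real.log (c₀ / δ ^ 2) + 2 * Real.log x)) / Real.sqrt x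
    + Real.exp (-1) / x with hBdef
  have hev1 : ∀ᶠ k : ℕ in atTop, B (k : ℝ) < ε₀ :=
    ((tend_aux c₀ δ).comp tendsto_natCast_atTop_atTop).eventually (gt_mem_nhds hε₀)
  have hev2 : ∀ᶠ k : ℕ in atTop, (δ / c₀) ^ 2 ≤ (k : ℝ) :=
    tendsto_natCast_atTop_atTop.eventually_ge_atTop _
  obtain ⟨K, hK⟩ := Filter.eventually_atTop.1 ((hev1.and hev2).and (eventually_ge_atTop 3))
  refine ⟨max K 3, le_trans (by norm_num) (le_max_right K 3), fun k hk => ?_⟩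
  obtain ⟨⟨hBk, hs⟩, hk3⟩ := hK k (le_trans (le_max_left K 3) hk)
  -- basic positivity facts
  have hk0 : (0:ℝ) < k := by
    have : (3:ℝ) ≤ (k:ℝ) := by exact_mod_cast hk3
    linarith
  have hsk : 0 < Real.sqrt k := Real.sqrt_pos.2 hk0
  have hk3' : (3:ℝ) ≤ (k:ℝ) := by exact_mod_cast hk3
  have hlogδ : Real.log δ ≤ 0 := Real.log_nonpos hδ0.le hδ1.le
  have hL : Real.log ((k:ℝ) / δ) = Real.log k + -Real.log δ := by
    rw [Real.log_div hk0.ne' hδ0.ne']; ring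
  have hlogk : 1 ≤ Real.log k := by
    rw [Real.le_log_iff_exp_le hk0]
    have := Real.exp_one_lt_d9
    linarith
  have hL1 : 1 ≤ Real.log ((k:ℝ) / δ) := by rw [hL]; linarith
  set R : ℝ := c₀ * Real.log ((k:ℝ) / δ) * Real.sqrt k with hRdef
  have hR0 : 0 < R := by
    apply mul_pos (mul_pos hc₀ (by linarith)) hsk
  have hδR : δ ≤ R := by
    have h1 : δ / c₀ ≤ Real.sqrt k := Real.le_sqrt_of_sq_le hs
    have h2 : δ ≤ c₀ * Real.sqrt k := by
      rw [div_le_iff₀ hc₀] at h1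
      linarith [mul_comm c₀ (Real.sqrt k)]
    calc δ ≤ c₀ * Real.sqrt k := h2
      _ ≤ c₀ * Real.log ((k:ℝ)/δ) * Real.sqrt k := by nlinarith
  have hcore := core k hk3 R δ hδ0 hδR
  -- bound the variable part by B k
  have hss : Real.sqrt k * Real.sqrt k = (k:ℝ) := Real.mul_self_sqrt hk0.le
  have hRk : R / k = c₀ * (Real.log k + -Real.log δ) / Real.sqrt k := by
    rw [hRdef, div_eq_div_iff hk0.ne' hsk.ne', hL]
    linear_combination (c₀ * (Real.log (k:ℝ) + -Real.log δ)) * hss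
  have hfac : Real.log (R / δ) ≤ Real.log (c₀ / δ ^ 2) + 2 * Real.log k := by
    have hlogkd : Real.log ((k:ℝ)/δ) ≤ (k:ℝ)/δ := by
      have := Real.log_le_sub_one_of_pos (show (0:ℝ) < (k:ℝ)/δ by positivity)
      linarith
    have hsqk : Real.sqrt k ≤ (k:ℝ) := by
      calc Real.sqrt k ≤ Real.sqrt ((k:ℝ) * k) := Real.sqrt_le_sqrt (by nlinarith)
        _ = k := Real.sqrt_mul_self hk0.le
    have hRδk : R / δ ≤ (c₀ / δ ^ 2) * (k:ℝ) ^ 2 := by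
      have h1 : R ≤ c₀ * ((k:ℝ)/δ) * k := by
        rw [hRdef]
        have := mul_le_mul (mul_le_mul_of_nonneg_left hlogkd hc₀.le) hsqk
          (Real.sqrt_nonneg _) (by positivity)
        linarith
      calc R / δ ≤ (c₀ * ((k:ℝ)/δ) * k) / δ := by gcongr
        _ = (c₀ / δ ^ 2) * (k:ℝ) ^ 2 := by field_simp
    calc Real.log (R / δ) ≤ Real.log ((c₀ / δ ^ 2) * (k:ℝ) ^ 2) :=
        Real.log_le_log (by positivity) hRδk
      _ = Real.log (c₀ / δ ^ 2) + 2 * Real.log k := by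
          rw [Real.log_mul (by positivity) (by positivity), Real.log_pow]
          push_cast
          ring
  have hX : R / k + R * Real.log (R / δ) / k + Real.exp (-1) / k ≤ B (k:ℝ) := by
    have h0 : 0 ≤ R / k := by positivity
    have h1 : (R / k) * (1 + Real.log (R / δ)) ≤
        (R / k) * (1 + Real.log (c₀ / δ ^ 2) + 2 * Real.log k) :=
      mul_le_mul_of_nonneg_left (by linarith) h0
    calc R / k + R * Real.log (R / δ) / k + Real.exp (-1) / k
        = (R / k) * (1 + Real.log (R / δ)) + Real.exp (-1) / k := by ring
      _ ≤ (R / k) * (1 + Real.log (c₀ / δ ^ 2) + 2 * Real.log k) + Real.exp (-1) / k := by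
          linarith
      _ = B (k:ℝ) := by rw [hBdef, hRk]; ring
  have : R / k + R * Real.log (R / δ) / k + Real.exp (-1) / k < ε₀ := lt_of_le_of_lt hX hBk
  calc ∑ d ∈ Finset.Icc 1 k, (1 - (d : ℝ) / (k : ℝ)) ^ k * robustSoliton k R δ d
      ≤ R / k + R * Real.log (R / δ) / k + Real.exp (-1) / k
        + Real.exp (-1) ^ 2 / 2 + Real.exp (-1) ^ 3 / (6 * (1 - Real.exp (-1))) := hcore
    _ < Real.exp (-2) := by rw [hε₀def] at this; linarith
end
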